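/- Fix the number of clusters J ≥ 2 and consider a sequence of populations indexed by t ∈ ℕ in which, for every j, n_j(t) → ∞, n_CO,j(t)/n_j(t) → p_j ∈ (0,1), n_l(t)/n_j(t) → ρ_lj ∈ [0,∞) for every l ≠ j, and τ_j(t) → τ_{j,∞}. Then the cluster-level identified value satisfies lim_{t→∞} ( τ_CL(t) − τ(t) ) = Σ_{j=1}^J τ_{j,∞} · [ Σ_{l ≠ j} p_j p_l (ρ_lj − 1) ] / [ (Σ_{l=1}^J p_l) · ( p_j + Σ_{l ≠ j} ρ_lj p_l ) ]. -/
import Mathlib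


open Finset Filter

/-- Fixed number of clusters with growing cluster sizes: the limiting bias of the
cluster-level identified value is
`Σ_j τ_{j,∞} [Σ_{l≠j} p_j p_l (ρ_lj − 1)] / [(Σ_l p_l)(p_j + Σ_{l≠j} ρ_lj p_l)]`. -/
theorem stmt9
    (J : ℕ) (hJ : 2 ≤ J)
    (n nCO : ℕ → Fin J → ℕ) (τc : ℕ → Fin J → ℝ)
    (hn1 : ∀ t j, 1 ≤ n t j) (hCO1 : ∀ t j, 1 ≤ nCO t j)
    (p : Fin J → ℝ) (hp : ∀ j, 0 < p j ∧ p j < 1)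
    (ρ : Fin J → Fin J → ℝ) (hρ : ∀ l j, 0 ≤ ρ l j)
    (τinf : Fin J → ℝ)
    (hngrow : ∀ j, Tendsto (fun t : ℕ => (n t j : ℝ)) atTop atTop)
    (hplim : ∀ j, Tendsto (fun t : ℕ => (nCO t j : ℝ) / n t j) atTop (nhds (p j)))
    (hρlim : ∀ l j, l ≠ j →
      Tendsto (fun t : ℕ => (n t l : ℝ) / n t j) atTop (nhds (ρ l j)))
    (hτlim : ∀ j, Tendsto (fun t : ℕ => τc t j) atTop (nhds (τinf j)))
    (τ τCL : ℕ → ℝ)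
    (hτ : ∀ t, τ t = (∑ j, (nCO t j : ℝ) * τc t j) / (∑ j, (nCO t j : ℝ)))
    (hτCL : ∀ t, τCL t = (∑ j, ((nCO t j : ℝ) / n t j) * τc t j) /
      (∑ j, (nCO t j : ℝ) / n t j)) :
    Tendsto (fun t : ℕ => τCL t - τ t) atTop
      (nhds (∑ j, τinf j *
        (∑ l ∈ univ.filter (fun l => l ≠ j), p j * p l * (ρ l j - 1)) /
        ((∑ l, p l) * (p j + ∑ l ∈ univ.filter (fun l => l ≠ j), ρ l j * p l)))) := by
  -- basic positivity
  have hnpos : ∀ t j, (0 : ℝ) < n t j := fun t j => by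
    exact_mod_cast Nat.lt_of_lt_of_le Nat.zero_lt_one (hn1 t j)
  have hCOpos : ∀ t j, (0 : ℝ) < nCO t j := fun t j => by
    exact_mod_cast Nat.lt_of_lt_of_le Nat.zero_lt_one (hCO1 t j)
  haveI hJne : Nonempty (Fin J) := ⟨⟨0, by omega⟩⟩
  have hppos : ∀ j, 0 < p j := fun j => (hp j).1
  set P : ℝ := ∑ l, p l with hPdef
  have hP : 0 < P := Finset.sum_pos (fun l _ => hppos l) univ_nonempty
  set D : Fin J → ℝ := fun j => ∑ l, (if l = j then 1 else ρ l j) * p l with hDdef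
  have hDeq : ∀ j, D j = p j + ∑ l ∈ univ.filter (fun l => l ≠ j), ρ l j * p l := by
    intro j
    have h1 : (univ.filter (fun l => l ≠ j)) = univ.erase j := Finset.filter_ne' univ j
    show (∑ l, (if l = j then 1 else ρ l j) * p l) = _
    rw [h1, ← Finset.add_sum_erase univ _ (mem_univ j)]
    rw [if_pos rfl, one_mul,
      Finset.sum_congr rfl (fun l hl => by
        rw [if_neg (Finset.ne_of_mem_erase hl)] :
        ∀ l ∈ univ.erase j, (if l = j then 1 else ρ l j) * p l = ρ l j * p l)]
  have hD : ∀ j, 0 < D j := by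
    intro j
    rw [hDeq]
    have : 0 ≤ ∑ l ∈ univ.filter (fun l => l ≠ j), ρ l j * p l :=
      Finset.sum_nonneg fun l _ => mul_nonneg (hρ l j) (hppos l).le
    linarith [hppos j]
  -- limits
  have hScl : Tendsto (fun t => ∑ l, (nCO t l : ℝ) / n t l) atTop (nhds P) := by
    exact tendsto_finset_sum _ (fun l _ => hplim l)
  have hA : ∀ j, Tendsto (fun t => ((nCO t j : ℝ) / n t j) / ∑ l, (nCO t l : ℝ) / n t l)
      atTop (nhds (p j / P)) := fun j => (hplim j).div hScl hP.ne'
  have hB : ∀ j, Tendsto (fun t => (nCO t j : ℝ) / ∑ l, (nCO t l : ℝ))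
      atTop (nhds (p j / D j)) := by
    intro j
    have hden : Tendsto (fun t => ∑ l, ((nCO t l : ℝ) / n t l) * ((n t l : ℝ) / n t j))
        atTop (nhds (D j)) := by
      refine tendsto_finset_sum _ (fun l _ => ?_)
      by_cases hlj : l = j
      · subst hlj
        have heq : (fun t => ((nCO t l : ℝ) / n t l) * ((n t l : ℝ) / n t l))
            = fun t => (nCO t l : ℝ) / n t l := by
          funext t; rw [div_self (hnpos t l).ne', mul_one]
        rw [heq, if_pos rfl, one_mul]
        exact hplim l
      · rw [if_neg hlj]
        have := (hplim l).mul (hρlim l j hlj)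
        rwa [mul_comm (p l)] at this
    have heq : (fun t => (nCO t j : ℝ) / ∑ l, (nCO t l : ℝ))
        = fun t => ((nCO t j : ℝ) / n t j) /
            ∑ l, ((nCO t l : ℝ) / n t l) * ((n t l : ℝ) / n t j) := by
      funext t
      have hS : (0 : ℝ) < ∑ l, (nCO t l : ℝ) :=
        Finset.sum_pos (fun l _ => hCOpos t l) univ_nonempty
      have h1 : ∑ l, ((nCO t l : ℝ) / n t l) * ((n t l : ℝ) / n t j)
          = (∑ l, (nCO t l : ℝ)) / n t j := by
        rw [Finset.sum_div]
        exact Finset.sum_congr rfl (fun l _ => div_mul_div_cancel₀ (hnpos t l).ne')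
      rw [h1, div_div_div_cancel_right₀ (hnpos t j).ne']
    rw [heq]
    exact (hplim j).div hden (hD j).ne'
  have hmain : Tendsto (fun t => ∑ j, τc t j *
      (((nCO t j : ℝ) / n t j) / (∑ l, (nCO t l : ℝ) / n t l)
        - (nCO t j : ℝ) / ∑ l, (nCO t l : ℝ))) atTop
      (nhds (∑ j, τinf j * (p j / P - p j / D j))) := by
    exact tendsto_finset_sum _ (fun j _ => (hτlim j).mul ((hA j).sub (hB j)))
  have hfun : (fun t : ℕ => τCL t - τ t) = fun t => ∑ j, τc t j *
      (((nCO t j : ℝ) / n t j) / (∑ l, (nCO t l : ℝ) / n t l)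
        - (nCO t j : ℝ) / ∑ l, (nCO t l : ℝ)) := by
    funext t
    rw [hτ t, hτCL t]
    simp only [mul_sub]
    rw [Finset.sum_sub_distrib, Finset.sum_div, Finset.sum_div]
    congr 1
    · exact Finset.sum_congr rfl (fun j _ => by rw [mul_comm, mul_div_assoc])
    · exact Finset.sum_congr rfl (fun j _ => by rw [mul_comm, mul_div_assoc])
  rw [hfun]
  convert hmain using 2
  refine Finset.sum_congr rfl (fun j _ => ?_)
  rw [← hDeq j]
  have hnum : ∑ l ∈ univ.filter (fun l => l ≠ j), p j * p l * (ρ l j - 1)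
      = p j * (D j - P) := by
    have h1 : (univ.filter (fun l => l ≠ j)) = univ.erase j := Finset.filter_ne' univ j
    have h2 : P = p j + ∑ l ∈ univ.erase j, p l := by
      rw [hPdef, ← Finset.add_sum_erase univ p (mem_univ j)]
    rw [hDeq j, h1, h2]
    have h3 : p j + ∑ l ∈ univ.erase j, ρ l j * p l - (p j + ∑ l ∈ univ.erase j, p l)
        = ∑ l ∈ univ.erase j, (ρ l j * p l - p l) := by
      rw [Finset.sum_sub_distrib]; ring
    rw [h3, Finset.mul_sum]
    exact Finset.sum_congr rfl (fun l _ => by ring)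
  rw [hnum, div_sub_div _ _ hP.ne' (hD j).ne']
  ring
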